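/- Let f be a monic polynomial of degree n ≥ 3 over ℂ with roots r_1, …, r_n (listed with multiplicity), and let H be the associated determinant polynomial. If for some indices i, j, k with 1 ≤ i < j ≤ n, 1 ≤ k ≤ n, k ≠ i, k ≠ j one has r_k = (r_i + r_j)/2, then H(r_k) = 0. -/

import Mathlib

/-- The determinant polynomial `H` associated with `f` of degree `n`: the determinant of
the `(n-2) × (n-2)` matrix whose entry in (1-indexed) row `p`, column `q` is
`f⁽²ᑫ⁻ᵖ⁺¹⁾/(2q-p+1)!` (a Hasse derivative of `f`) when `2q - p + 1 ≥ 1`, and `0`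
when `2q - p + 1 ≤ 0`. (Below `p q : Fin (n-2)` are 0-indexed, so the derivative
order is `2q - p + 2`.) -/
noncomputable def Hdet {R : Type} [CommRing R] (n : ℕ) (f : Polynomial R) : Polynomial R :=
  Matrix.det (Matrix.of fun p q : Fin (n - 2) =>
    if (p : ℕ) ≤ 2 * (q : ℕ) + 1 then Polynomial.hasseDeriv (2 * (q : ℕ) + 2 - (p : ℕ)) f
    else 0)

private lemma sum_range_even_odd (f : ℕ → ℂ) (n : ℕ) :
    ∑ m ∈ Finset.range (2*n), f m
      = ∑ s ∈ Finset.range n, f (2*s) + ∑ s ∈ Finset.range n, f (2*s+1) := by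
  induction n with
  | zero => simp
  | succ n ih =>
      rw [show 2*(n+1) = 2*n+1+1 by ring, Finset.sum_range_succ, Finset.sum_range_succ,
        Finset.sum_range_succ (fun s => f (2*s)), Finset.sum_range_succ (fun s => f (2*s+1)), ih]
      ring

private lemma filter_le_range_eq (a K : ℕ) :
    (Finset.range K).filter (fun q => a ≤ q) = Finset.Ico a K := by
  ext q
  simp [Finset.mem_filter, Finset.mem_range, Finset.mem_Ico, and_comm]

private lemma row_zero (c : ℕ → ℂ) (t : ℂ) (n a b : ℕ) (hb : b ≤ 2)
    (hE : ∑ s ∈ Finset.range n, c (2*s+b) * t^(2*s) = 0)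
    (hvan : ∀ m, n < m → c m = 0)
    (hbig : 2*a + 5 ≤ n + b) :
    ∑ q ∈ Finset.range (n-2), (if a ≤ q then c (2*q + b - 2*a) else 0) * t^(2*q) = 0 := by
  have h1 : ∑ q ∈ Finset.range (n-2), (if a ≤ q then c (2*q + b - 2*a) else 0) * t^(2*q)
      = ∑ q ∈ Finset.Ico a (n-2), c (2*q + b - 2*a) * t^(2*q) := by
    rw [← filter_le_range_eq, Finset.sum_filter]
    exact Finset.sum_congr rfl (fun q _ => by rw [ite_mul, zero_mul])
  rw [h1, Finset.sum_Ico_eq_sum_range]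
  have h2 : ∀ s ∈ Finset.range (n-2-a), c (2*(a+s) + b - 2*a) * t^(2*(a+s))
      = (c (2*s+b) * t^(2*s)) * t^(2*a) := by
    intro s _
    rw [show 2*(a+s)+b-2*a = 2*s+b by omega, show 2*(a+s) = 2*s + 2*a by ring, pow_add]
    ring
  rw [Finset.sum_congr rfl h2, ← Finset.sum_mul]
  have h3 : ∑ s ∈ Finset.range (n-2-a), c (2*s+b) * t^(2*s)
      = ∑ s ∈ Finset.range n, c (2*s+b) * t^(2*s) := by
    apply Finset.sum_subset (Finset.range_subset_range.mpr (by omega))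
    intro s hs hns
    simp only [Finset.mem_range] at hs hns
    rw [hvan _ (by omega), zero_mul]
  rw [h3, hE, zero_mul]

/-- For a monic polynomial `f` of degree `n ≥ 3` over `ℂ` with roots
`r 0, …, r (n-1)` (with multiplicity): if `r k = (r i + r j)/2` for some indices
`i < j`, `k ≠ i`, `k ≠ j`, then `H(r k) = 0`. -/
theorem Hdet_eval_eq_zero_of_symmetric_triple
    (n : ℕ) (hn : 3 ≤ n) (r : Fin n → ℂ) (f : Polynomial ℂ)
    (hf : f = ∏ i : Fin n, (Polynomial.X - Polynomial.C (r i)))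
    (i j k : Fin n) (hij : i < j) (hki : k ≠ i) (hkj : k ≠ j)
    (havg : r k = (r i + r j) / 2) :
    (Hdet n f).eval (r k) = 0 := by
  classical
  have hdeg : f.natDegree = n := by
    rw [hf, Polynomial.natDegree_prod _ _ (fun l _ => Polynomial.X_sub_C_ne_zero (r l))]
    simp [Polynomial.natDegree_X_sub_C]
  have hroot : ∀ l : Fin n, f.eval (r l) = 0 := by
    intro l
    rw [hf, Polynomial.eval_prod]
    exact Finset.prod_eq_zero (Finset.mem_univ l) (by simp)
  set x : ℂ := r k with hxdef
  set t : ℂ := r i - x with htdef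
  have hrj : r j = x - t := by rw [htdef, havg]; ring
  set g : Polynomial ℂ := Polynomial.taylor x f with hg
  have hgdeg : g.natDegree = n := by rw [hg, Polynomial.natDegree_taylor, hdeg]
  have hvan : ∀ m, n < m → g.coeff m = 0 := fun m hm =>
    Polynomial.coeff_eq_zero_of_natDegree_lt (by omega)
  have hgeval : ∀ s : ℂ, g.eval s = f.eval (s + x) := fun s => Polynomial.taylor_eval x f s
  have hc0 : g.coeff 0 = 0 := by
    rw [Polynomial.coeff_zero_eq_eval_zero, hgeval, zero_add]
    exact hroot k
  have hplus : ∑ m ∈ Finset.range (n+1), g.coeff m * t^m = 0 := by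
    rw [show n + 1 = g.natDegree + 1 by rw [hgdeg], ← Polynomial.eval_eq_sum_range, hgeval,
      show t + x = r i by rw [htdef]; ring]
    exact hroot i
  have hminus : ∑ m ∈ Finset.range (n+1), g.coeff m * (-t)^m = 0 := by
    rw [show n + 1 = g.natDegree + 1 by rw [hgdeg], ← Polynomial.eval_eq_sum_range, hgeval,
      show -t + x = r j by rw [hrj]; ring]
    exact hroot j
  have hsplit : ∀ u : ℂ, (∑ m ∈ Finset.range (n+1), g.coeff m * u^m = 0) →
      ∑ s ∈ Finset.range n, g.coeff (2*s) * u^(2*s)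
        + ∑ s ∈ Finset.range n, g.coeff (2*s+1) * u^(2*s+1) = 0 := by
    intro u h
    rw [← sum_range_even_odd (fun m => g.coeff m * u^m) n, ← h]
    refine (Finset.sum_subset (Finset.range_subset_range.mpr (by omega)) ?_).symm
    intro m hm hnm
    simp only [Finset.mem_range] at hm hnm
    rw [hvan m (by omega), zero_mul]
  have hP2 : ∑ s ∈ Finset.range n, g.coeff (2*s) * t^(2*s)
      + ∑ s ∈ Finset.range n, g.coeff (2*s+1) * t^(2*s+1) = 0 := hsplit t hplus
  have hM2 : ∑ s ∈ Finset.range n, g.coeff (2*s) * t^(2*s)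
      - ∑ s ∈ Finset.range n, g.coeff (2*s+1) * t^(2*s+1) = 0 := by
    have h := hsplit (-t) hminus
    have he : ∀ s ∈ Finset.range n, g.coeff (2*s) * (-t)^(2*s) = g.coeff (2*s) * t^(2*s) := by
      intro s _
      rw [(even_two_mul s).neg_pow]
    have ho : ∀ s ∈ Finset.range n, g.coeff (2*s+1) * (-t)^(2*s+1)
        = -(g.coeff (2*s+1) * t^(2*s+1)) := by
      intro s _
      rw [(odd_two_mul_add_one s).neg_pow]
      ring
    rw [Finset.sum_congr rfl he, Finset.sum_congr rfl ho, Finset.sum_neg_distrib] at h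
    linear_combination h
  have hP : ∑ s ∈ Finset.range n, g.coeff (2*s) * t^(2*s) = 0 := by
    linear_combination (hP2 + hM2) / 2
  have hQ : ∑ s ∈ Finset.range n, g.coeff (2*s+1) * t^(2*s+1) = 0 := by
    linear_combination (hP2 - hM2) / 2
  have hlow : t = 0 → ∀ m < 3, g.coeff m = 0 := by
    intro ht0 m hm
    have hri : r i = x := by
      have h := htdef
      rw [ht0] at h
      linear_combination -h
    have hrjx : r j = x := by rw [hrj, ht0, sub_zero]
    have hne_ij : i ≠ j := Fin.ne_of_lt hij
    have hijk : ({i, j, k} : Finset (Fin n)).card = 3 := by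
      rw [Finset.card_insert_of_notMem, Finset.card_insert_of_notMem, Finset.card_singleton]
      · simp only [Finset.mem_singleton]
        exact fun h => hkj h.symm
      · simp only [Finset.mem_insert, Finset.mem_singleton]
        push_neg
        exact ⟨hne_ij, fun h => hki h.symm⟩
    have hprod : ∏ l ∈ ({i, j, k} : Finset (Fin n)), (Polynomial.X - Polynomial.C (r l))
        = (Polynomial.X - Polynomial.C x)^3 := by
      rw [Finset.prod_congr rfl (g := fun _ => Polynomial.X - Polynomial.C x)
        (fun l hl => ?_), Finset.prod_const, hijk]
      have hlx : r l = x := by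
        simp only [Finset.mem_insert, Finset.mem_singleton] at hl
        rcases hl with h | h | h
        · rw [h, hri]
        · rw [h, hrjx]
        · rw [h]
      rw [hlx]
    have hdvd : (Polynomial.X - Polynomial.C x)^3 ∣ f := by
      rw [hf, ← hprod]
      exact Finset.prod_dvd_prod_of_subset _ _ _ (Finset.subset_univ _)
    have hXdvd : (Polynomial.X : Polynomial ℂ)^3 ∣ g := by
      have h2 := map_dvd (Polynomial.taylorAlgHom x) hdvd
      have h3 : (Polynomial.taylorAlgHom x) ((Polynomial.X - Polynomial.C x)^3)
          = Polynomial.X^3 := by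
        rw [map_pow, map_sub]
        simp [Polynomial.coe_taylorAlgHom, Polynomial.taylor_X, Polynomial.taylor_C]
      rw [h3] at h2
      exact h2
    exact Polynomial.X_pow_dvd_iff.mp hXdvd m hm
  have hOd : ∑ s ∈ Finset.range n, g.coeff (2*s+1) * t^(2*s) = 0 := by
    by_cases ht0 : t = 0
    · rw [ht0, Finset.sum_eq_single 0]
      · simpa using hlow ht0 1 (by omega)
      · intro s _ hs
        rw [zero_pow (by omega), mul_zero]
      · intro h
        exact absurd (Finset.mem_range.mpr (by omega)) h
    · have h : (∑ s ∈ Finset.range n, g.coeff (2*s+1) * t^(2*s)) * t = 0 := by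
        rw [Finset.sum_mul, ← hQ]
        exact Finset.sum_congr rfl (fun s _ => by rw [pow_succ]; ring)
      rcases mul_eq_zero.mp h with h' | h'
      · exact h'
      · exact absurd h' ht0
  have hEv : ∑ s ∈ Finset.range n, g.coeff (2*s+2) * t^(2*s) = 0 := by
    by_cases ht0 : t = 0
    · rw [ht0, Finset.sum_eq_single 0]
      · simpa using hlow ht0 2 (by omega)
      · intro s _ hs
        rw [zero_pow (by omega), mul_zero]
      · intro h
        exact absurd (Finset.mem_range.mpr (by omega)) h
    · have hP' : ∑ s ∈ Finset.range (n-1), g.coeff (2*(s+1)) * t^(2*(s+1)) = 0 := by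
        have h := hP
        rw [show n = (n-1)+1 by omega, Finset.sum_range_succ'] at h
        simpa [hc0] using h
      have h4 : (∑ s ∈ Finset.range (n-1), g.coeff (2*s+2) * t^(2*s)) * t^2 = 0 := by
        rw [Finset.sum_mul, ← hP']
        refine Finset.sum_congr rfl (fun s _ => ?_)
        rw [show 2*(s+1) = 2*s+2 by ring]
        rw [pow_add]
        ring
      have h5 : ∑ s ∈ Finset.range (n-1), g.coeff (2*s+2) * t^(2*s) = 0 := by
        rcases mul_eq_zero.mp h4 with h' | h'
        · exact h'
        · exact absurd (pow_eq_zero_iff (by norm_num) |>.mp h') ht0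
      rw [← h5]
      refine (Finset.sum_subset (Finset.range_subset_range.mpr (by omega)) ?_).symm
      intro s hs hns
      simp only [Finset.mem_range] at hs hns
      rw [hvan _ (by omega), zero_mul]
  set w : Fin (n-2) → ℂ := fun q => t^(2*(q:ℕ)) with hw
  have hne : w ≠ 0 := by
    intro h
    have h0 : (0:ℕ) < n - 2 := by omega
    have h1 := congrFun h ⟨0, h0⟩
    simp [hw] at h1
  have hmul : (Matrix.of fun p q : Fin (n-2) =>
      if (p : ℕ) ≤ 2 * (q : ℕ) + 1 then g.coeff (2 * (q : ℕ) + 2 - (p : ℕ)) else 0).mulVec w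
      = 0 := by
    funext p
    simp only [Matrix.mulVec, dotProduct, Matrix.of_apply, hw, Pi.zero_apply]
    rw [Fin.sum_univ_eq_sum_range (fun q =>
      (if (p : ℕ) ≤ 2 * q + 1 then g.coeff (2 * q + 2 - (p : ℕ)) else 0) * t^(2*q)) (n-2)]
    rcases Nat.even_or_odd (p : ℕ) with ⟨a, hp⟩ | ⟨a, hp⟩
    · have hcongr : ∀ q ∈ Finset.range (n-2),
          (if (p : ℕ) ≤ 2*q+1 then g.coeff (2*q+2-(p : ℕ)) else 0) * t^(2*q)
          = (if a ≤ q then g.coeff (2*q+2-2*a) else 0) * t^(2*q) := by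
        intro q _
        congr 1
        exact if_congr (by omega) (by congr 1; omega) rfl
      rw [Finset.sum_congr rfl hcongr]
      exact row_zero (fun m => g.coeff m) t n a 2 (by norm_num) hEv hvan
        (by have := p.isLt; omega)
    · have hcongr : ∀ q ∈ Finset.range (n-2),
          (if (p : ℕ) ≤ 2*q+1 then g.coeff (2*q+2-(p : ℕ)) else 0) * t^(2*q)
          = (if a ≤ q then g.coeff (2*q+1-2*a) else 0) * t^(2*q) := by
        intro q _
        congr 1
        exact if_congr (by omega) (by congr 1; omega) rfl
      rw [Finset.sum_congr rfl hcongr]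
      exact row_zero (fun m => g.coeff m) t n a 1 (by norm_num) hOd hvan
        (by have := p.isLt; omega)
  have hdet0 : (Matrix.of fun p q : Fin (n-2) =>
      if (p : ℕ) ≤ 2 * (q : ℕ) + 1 then g.coeff (2 * (q : ℕ) + 2 - (p : ℕ)) else 0).det = 0 := by
    rw [← Matrix.exists_mulVec_eq_zero_iff]
    exact ⟨w, hne, hmul⟩
  have hmap : (Matrix.of fun p q : Fin (n-2) =>
      if (p : ℕ) ≤ 2 * (q : ℕ) + 1 then Polynomial.hasseDeriv (2 * (q : ℕ) + 2 - (p : ℕ)) f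
      else 0).map (Polynomial.evalRingHom x)
      = Matrix.of fun p q : Fin (n-2) =>
      if (p : ℕ) ≤ 2 * (q : ℕ) + 1 then g.coeff (2 * (q : ℕ) + 2 - (p : ℕ)) else 0 := by
    ext p q
    simp only [Matrix.map_apply, Matrix.of_apply, apply_ite (Polynomial.evalRingHom x), map_zero,
      Polynomial.coe_evalRingHom]
    split
    · rw [hg, Polynomial.taylor_coeff]
    · exact Polynomial.eval_zero
  rw [Hdet, ← Polynomial.coe_evalRingHom, RingHom.map_det, RingHom.mapMatrix_apply, hmap]
  exact hdet0
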